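/- For a finite simple graph G, let f(G) denote the simple graph on the vertex set V(G) × {0,1} in which (u,0) and (v,0) are adjacent if and only if uv is an edge of G, (u,0) is adjacent to (u,1) for every u ∈ V(G), and there are no other edges (f(G) is obtained from G by adding a pendant vertex to each vertex). Then for all finite simple graphs G and H, G contains H as an induced subgraph if and only if f(G) contains f(H) as an induced subgraph; equivalently, G is H-free if and only if f(G) is f(H)-free. -/

import Mathlib

/-- The graph obtained from `G` by adding a pendant vertex to each vertex: on
`V × {0, 1}`, the vertices `(u, 0)` and `(v, 0)` are adjacent iff `uv ∈ E(G)`, and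
`(u, 0)` is adjacent to `(u, 1)` for every `u`; there are no other edges. -/
def addPendants {V : Type*} (G : SimpleGraph V) : SimpleGraph (V × Fin 2) where
  Adj x y := (x.2 = 0 ∧ y.2 = 0 ∧ G.Adj x.1 y.1) ∨ (x.1 = y.1 ∧ x.2 ≠ y.2)
  symm := by
    refine ⟨?_⟩
    rintro x y (⟨h0, h1, h⟩ | ⟨h1, h2⟩)
    · exact Or.inl ⟨h1, h0, G.adj_symm h⟩
    · exact Or.inr ⟨h1.symm, h2.symm⟩
  loopless := by
    refine ⟨?_⟩
    rintro x (⟨-, -, h⟩ | ⟨-, h⟩)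
    · exact G.irrefl h
    · exact h rfl

lemma addPendants_adj {V : Type*} (G : SimpleGraph V) (x y : V × Fin 2) :
    (addPendants G).Adj x y ↔
      (x.2 = 0 ∧ y.2 = 0 ∧ G.Adj x.1 y.1) ∨ (x.1 = y.1 ∧ x.2 ≠ y.2) := Iff.rfl

lemma fin2cases (a : Fin 2) : a = 0 ∨ a = 1 := by
  rcases a with ⟨v, hv⟩
  interval_cases v
  · exact Or.inl rfl
  · exact Or.inr rfl

theorem induced_iff_addPendants_induced {V W : Type*} [Fintype V] [Fintype W]
    (G : SimpleGraph V) (H : SimpleGraph W) :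
    Nonempty (H ↪g G) ↔ Nonempty (addPendants H ↪g addPendants G) := by
  constructor
  · rintro ⟨φ⟩
    refine ⟨⟨⟨fun x => (φ x.1, x.2), ?_⟩, ?_⟩⟩
    · intro x y h
      rw [Prod.mk.injEq] at h
      exact Prod.ext (φ.injective h.1) h.2
    · intro a b
      change (addPendants G).Adj (φ a.1, a.2) (φ b.1, b.2) ↔ _
      simp only [addPendants_adj, RelEmbedding.coe_toEmbedding, Function.Embedding.coeFn_mk,
        φ.map_adj_iff, φ.injective.eq_iff]
  · rintro ⟨ψ⟩
    -- the key map
    set g : W → V := fun w => (ψ (w, 0)).1 with hg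
    -- (w,0) and (w,1) are adjacent in addPendants H
    have hpend : ∀ w : W, (addPendants H).Adj (w, 0) (w, 1) := by
      intro w; exact Or.inr ⟨rfl, by simp⟩
    have key : ∀ w : W, (ψ (w, 0)).2 = 1 →
        ψ (w, 1) = ((ψ (w, 0)).1, 0) ∧ ∀ w', ¬ H.Adj w w' := by
      intro w hw
      have h1 : (addPendants G).Adj (ψ (w, 1)) (ψ (w, 0)) :=
        ψ.map_rel_iff.2 ((hpend w).symm)
      have h2 : ψ (w, 1) = ((ψ (w, 0)).1, 0) := by
        rcases h1 with ⟨-, h0, -⟩ | ⟨ha, hb⟩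
        · rw [hw] at h0; exact absurd h0 (by decide)
        · rcases fin2cases (ψ (w, 1)).2 with h | h
          · exact Prod.ext ha h
          · rw [hw] at hb; exact absurd h (by simpa using hb)
      refine ⟨h2, fun w' hadj => ?_⟩
      have h3 : (addPendants G).Adj (ψ (w', 0)) (ψ (w, 0)) :=
        ψ.map_rel_iff.2 (Or.inl ⟨rfl, rfl, hadj.symm⟩)
      have h4 : ψ (w', 0) = ((ψ (w, 0)).1, 0) := by
        rcases h3 with ⟨-, h0, -⟩ | ⟨ha, hb⟩
        · rw [hw] at h0; exact absurd h0 (by decide)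
        · rcases fin2cases (ψ (w', 0)).2 with h | h
          · exact Prod.ext ha h
          · rw [hw] at hb; exact absurd h (by simpa using hb)
      have := ψ.injective (h4.trans h2.symm)
      simp at this
    refine ⟨⟨⟨g, ?_⟩, ?_⟩⟩
    · intro w w' h
      by_contra hne
      rcases fin2cases (ψ (w, 0)).2 with hw | hw <;>
        rcases fin2cases (ψ (w', 0)).2 with hw' | hw'
      · have : ψ (w, 0) = ψ (w', 0) := Prod.ext h (hw.trans hw'.symm)
        have := ψ.injective this
        simp at this; exact hne this
      · -- ψ(w,0)=(u,0), ψ(w',0)=(u,1): adjacent in f(G), so H.Adj w w', but w' isolated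
        have hadjG : (addPendants G).Adj (ψ (w, 0)) (ψ (w', 0)) :=
          Or.inr ⟨h, by rw [hw, hw']; decide⟩
        have hadjH := ψ.map_rel_iff.1 hadjG
        rcases hadjH with ⟨-, -, hA⟩ | ⟨hA, hB⟩
        · exact (key w' hw').2 w hA.symm
        · exact hne hA
      · have hadjG : (addPendants G).Adj (ψ (w, 0)) (ψ (w', 0)) :=
          Or.inr ⟨h, by rw [hw, hw']; decide⟩
        have hadjH := ψ.map_rel_iff.1 hadjG
        rcases hadjH with ⟨-, -, hA⟩ | ⟨hA, hB⟩
        · exact (key w hw).2 w' hA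
        · exact hne hA
      · have : ψ (w, 0) = ψ (w', 0) := Prod.ext h (hw.trans hw'.symm)
        have := ψ.injective this
        simp at this; exact hne this
    · intro w w'
      constructor
      · intro hGadj
        -- G.Adj (g w) (g w')
        have hne : w ≠ w' := by
          rintro rfl; exact G.irrefl hGadj
        rcases fin2cases (ψ (w, 0)).2 with hw | hw <;>
          rcases fin2cases (ψ (w', 0)).2 with hw' | hw'
        · have hadjG : (addPendants G).Adj (ψ (w, 0)) (ψ (w', 0)) :=
            Or.inl ⟨hw, hw', hGadj⟩
          rcases ψ.map_rel_iff.1 hadjG with ⟨-, -, hA⟩ | ⟨-, hB⟩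
          · exact hA
          · exact absurd rfl hB
        · -- ψ(w',0) = (u',1); then ψ(w',1) = (u',0); (u,0)=ψ(w,0) adj (u',0)
          obtain ⟨h2, -⟩ := key w' hw'
          have hadjG : (addPendants G).Adj (ψ (w, 0)) (ψ (w', 1)) := by
            rw [h2]
            exact Or.inl ⟨hw, rfl, hGadj⟩
          have := ψ.map_rel_iff.1 hadjG
          rcases this with ⟨-, -, hA⟩ | ⟨hA, -⟩
          · exact absurd hA.symm ((key w' hw').2 w)
          · exact absurd hA hne
        · obtain ⟨h2, -⟩ := key w hw
          have hadjG : (addPendants G).Adj (ψ (w, 1)) (ψ (w', 0)) := by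
            rw [h2]
            exact Or.inl ⟨rfl, hw', hGadj⟩
          have := ψ.map_rel_iff.1 hadjG
          rcases this with ⟨hA, -, -⟩ | ⟨hA, -⟩
          · simp at hA
          · exact absurd hA hne
        · obtain ⟨h2, -⟩ := key w hw
          obtain ⟨h2', -⟩ := key w' hw'
          have hadjG : (addPendants G).Adj (ψ (w, 1)) (ψ (w', 1)) := by
            rw [h2, h2']
            exact Or.inl ⟨rfl, rfl, hGadj⟩
          have := ψ.map_rel_iff.1 hadjG
          rcases this with ⟨hA, -, -⟩ | ⟨-, hA⟩
          · simp at hA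
          · exact absurd rfl hA
      · intro hHadj
        have hw : (ψ (w, 0)).2 = 0 := by
          rcases fin2cases (ψ (w, 0)).2 with h | h
          · exact h
          · exact absurd hHadj ((key w h).2 w')
        have hw' : (ψ (w', 0)).2 = 0 := by
          rcases fin2cases (ψ (w', 0)).2 with h | h
          · exact h
          · exact absurd hHadj.symm ((key w' h).2 w)
        have hadjG := ψ.map_rel_iff.2 (Or.inl ⟨rfl, rfl, hHadj⟩ :
          (addPendants H).Adj (w, 0) (w', 0))
        rcases hadjG with ⟨-, -, hA⟩ | ⟨-, hB⟩
        · exact hA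
        · rw [hw, hw'] at hB; exact absurd rfl hB
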